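/- Let θ > 0 and define β(t) = (sin²(tθ) − (tθ)²)/(sin²(θ) − θ²) for t ∈ (0,1]. Then t ↦ β(t)/t⁴ is non-increasing on (0,1]; in particular β(t) ≥ t⁴ for all t ∈ (0,1]. -/

import Mathlib

open Set

private lemma hasDerivAt_sin2 (x : ℝ) :
    HasDerivAt (fun x : ℝ => Real.sin (2 * x)) (2 * Real.cos (2 * x)) x := by
  have h := (Real.hasDerivAt_sin (2 * x)).comp x ((hasDerivAt_id x).const_mul 2)
  simp only [Function.comp_def, id_eq] at h
  refine h.congr_deriv ?_
  ring

private lemma hasDerivAt_cos2 (x : ℝ) :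
    HasDerivAt (fun x : ℝ => Real.cos (2 * x)) (-(2 * Real.sin (2 * x))) x := by
  have h := (Real.hasDerivAt_cos (2 * x)).comp x ((hasDerivAt_id x).const_mul 2)
  simp only [Function.comp_def, id_eq] at h
  refine h.congr_deriv ?_
  ring

private lemma nonpos_on_Icc {f f' : ℝ → ℝ} {a : ℝ} (ha : 0 ≤ a)
    (hd : ∀ x, HasDerivAt f (f' x) x) (h0 : f 0 = 0)
    (hf' : ∀ x ∈ Icc (0:ℝ) a, f' x ≤ 0) :
    ∀ x ∈ Icc (0:ℝ) a, f x ≤ 0 := by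
  have hanti : AntitoneOn f (Icc 0 a) := by
    apply antitoneOn_of_deriv_nonpos (convex_Icc 0 a)
    · exact fun x _ => (hd x).continuousAt.continuousWithinAt
    · exact fun x _ => (hd x).differentiableAt.differentiableWithinAt
    · intro x hx
      rw [(hd x).deriv]
      exact hf' x (interior_subset hx)
  intro x hx
  calc f x ≤ f 0 := hanti ⟨le_refl 0, ha⟩ hx hx.1
  _ = 0 := h0

private lemma p_nonpos : ∀ u ∈ Icc (0:ℝ) Real.pi, u * Real.cos u - Real.sin u ≤ 0 := by
  apply nonpos_on_Icc Real.pi_pos.le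
    (f' := fun u => -(u * Real.sin u))
  · intro u
    have h := ((hasDerivAt_id u).mul (Real.hasDerivAt_cos u)).sub (Real.hasDerivAt_sin u)
    simp only [id_eq] at h
    refine h.congr_deriv ?_
    ring
  · simp
  · intro u hu
    have : 0 ≤ Real.sin u := Real.sin_nonneg_of_nonneg_of_le_pi hu.1 hu.2
    have : 0 ≤ u * Real.sin u := mul_nonneg hu.1 this
    linarith

private lemma k_hasDeriv (x : ℝ) :
    HasDerivAt (fun x : ℝ => Real.cos (2*x) + x * Real.sin (2*x) - 1)
      (2*x * Real.cos (2*x) - Real.sin (2*x)) x := by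
  have h := ((hasDerivAt_cos2 x).add ((hasDerivAt_id x).mul (hasDerivAt_sin2 x))).sub
    (hasDerivAt_const x 1)
  simp only [id_eq] at h
  refine h.congr_deriv ?_
  ring

private lemma k_nonpos : ∀ x ∈ Icc (0:ℝ) 2,
    Real.cos (2*x) + x * Real.sin (2*x) - 1 ≤ 0 := by
  have hpi3 := Real.pi_gt_three
  have hhalf : ∀ x ∈ Icc (0:ℝ) (Real.pi/2),
      Real.cos (2*x) + x * Real.sin (2*x) - 1 ≤ 0 := by
    apply nonpos_on_Icc (by positivity)
      (f' := fun x => 2*x * Real.cos (2*x) - Real.sin (2*x))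
    · exact k_hasDeriv
    · simp
    · intro x hx
      exact p_nonpos (2*x) ⟨by linarith [hx.1], by linarith [hx.2]⟩
  intro x hx
  rcases le_or_gt x (Real.pi/2) with h | h
  · exact hhalf x ⟨hx.1, h⟩
  · have hsin : Real.sin (2*x) ≤ 0 := by
      have h1 : Real.sin (2*x - Real.pi) ≥ 0 :=
        Real.sin_nonneg_of_nonneg_of_le_pi (by linarith) (by linarith [hx.2])
      have h2 : Real.sin (2*x - Real.pi) = -Real.sin (2*x) := Real.sin_sub_pi (2*x)
      linarith
    have hmul : x * Real.sin (2*x) ≤ 0 := mul_nonpos_of_nonneg_of_nonpos hx.1 hsin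
    have hcos : Real.cos (2*x) ≤ 1 := Real.cos_le_one _
    linarith

private lemma q_hasDeriv (x : ℝ) :
    HasDerivAt (fun x : ℝ => 3 * Real.sin (2*x) - 2*x * Real.cos (2*x) - 4*x)
      (4 * (Real.cos (2*x) + x * Real.sin (2*x) - 1)) x := by
  have h := (((hasDerivAt_sin2 x).const_mul 3).sub
      (((hasDerivAt_id x).const_mul 2).mul (hasDerivAt_cos2 x))).sub
      ((hasDerivAt_id x).const_mul 4)
  simp only [id_eq] at h
  refine h.congr_deriv ?_
  ring

private lemma q_nonpos : ∀ x ∈ Icc (0:ℝ) 2,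
    3 * Real.sin (2*x) - 2*x * Real.cos (2*x) - 4*x ≤ 0 := by
  apply nonpos_on_Icc (by norm_num)
    (f' := fun x => 4 * (Real.cos (2*x) + x * Real.sin (2*x) - 1))
  · exact q_hasDeriv
  · simp
  · intro x hx
    have := k_nonpos x hx
    linarith

private lemma f_hasDeriv (x : ℝ) :
    HasDerivAt (fun x : ℝ => 2 - 2*x^2 - x * Real.sin (2*x) - 2 * Real.cos (2*x))
      (3 * Real.sin (2*x) - 2*x * Real.cos (2*x) - 4*x) x := by
  have h := (((hasDerivAt_const x 2).sub ((hasDerivAt_pow 2 x).const_mul 2)).sub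
      ((hasDerivAt_id x).mul (hasDerivAt_sin2 x))).sub
      ((hasDerivAt_cos2 x).const_mul 2)
  simp only [id_eq] at h
  refine h.congr_deriv ?_
  push_cast
  ring

private lemma f_nonpos : ∀ x : ℝ, 0 ≤ x →
    2 - 2*x^2 - x * Real.sin (2*x) - 2 * Real.cos (2*x) ≤ 0 := by
  have hsmall : ∀ x ∈ Icc (0:ℝ) 2,
      2 - 2*x^2 - x * Real.sin (2*x) - 2 * Real.cos (2*x) ≤ 0 := by
    apply nonpos_on_Icc (by norm_num)
      (f' := fun x => 3 * Real.sin (2*x) - 2*x * Real.cos (2*x) - 4*x)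
    · exact f_hasDeriv
    · simp
    · exact q_nonpos
  intro x hx
  rcases le_or_gt x 2 with h | h
  · exact hsmall x ⟨hx, h⟩
  · have h1 := Real.neg_one_le_sin (2*x)
    have h2 := Real.neg_one_le_cos (2*x)
    nlinarith

private noncomputable def Gf (x : ℝ) : ℝ := (x^2 - Real.sin x ^ 2) / x^4

private lemma Gf_hasDeriv {x : ℝ} (hx : 0 < x) :
    HasDerivAt Gf ((2 - 2*x^2 - x * Real.sin (2*x) - 2 * Real.cos (2*x)) / x^5) x := by
  have hx4 : (x:ℝ)^4 ≠ 0 := by positivity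
  have hnum : HasDerivAt (fun x : ℝ => x^2 - Real.sin x ^ 2)
      (2*x - 2 * Real.sin x * Real.cos x) x := by
    have h := (hasDerivAt_pow 2 x).sub ((Real.hasDerivAt_sin x).pow 2)
    refine h.congr_deriv ?_
    push_cast
    ring
  have h := hnum.div (hasDerivAt_pow 4 x) hx4
  have heq : (2 - 2*x^2 - x * Real.sin (2*x) - 2 * Real.cos (2*x)) / x^5 =
      ((2*x - 2 * Real.sin x * Real.cos x) * x^4 - (x^2 - Real.sin x ^ 2) * ((4:ℕ) * x^(4-1))) /
        (x^4)^2 := by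
    rw [Real.sin_two_mul, Real.cos_two_mul]
    have hsc : Real.cos x ^ 2 = 1 - Real.sin x ^ 2 := by
      nlinarith [Real.sin_sq_add_cos_sq x]
    rw [hsc]
    field_simp
    ring
  rw [heq]
  exact h

private lemma Gf_antitone : AntitoneOn Gf (Ioi 0) := by
  apply antitoneOn_of_deriv_nonpos (convex_Ioi 0)
  · intro x hx
    exact (Gf_hasDeriv hx).continuousAt.continuousWithinAt
  · intro x hx
    rw [interior_Ioi] at hx
    exact (Gf_hasDeriv hx).differentiableAt.differentiableWithinAt
  · intro x hx
    rw [interior_Ioi] at hx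
    have hx' : (0:ℝ) < x := hx
    rw [(Gf_hasDeriv hx').deriv]
    exact div_nonpos_of_nonpos_of_nonneg (f_nonpos x hx'.le) (pow_pos hx' 5).le

theorem stmt4 (θ : ℝ) (hθ : 0 < θ) :
    AntitoneOn
      (fun t : ℝ =>
        ((Real.sin (t * θ)) ^ 2 - (t * θ) ^ 2) / ((Real.sin θ) ^ 2 - θ ^ 2) / t ^ 4)
      (Ioc 0 1) ∧
    ∀ t ∈ Ioc (0 : ℝ) 1,
      ((Real.sin (t * θ)) ^ 2 - (t * θ) ^ 2) / ((Real.sin θ) ^ 2 - θ ^ 2) ≥ t ^ 4 := by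
  have hsin : Real.sin θ ^ 2 < θ ^ 2 := by
    have h1 : Real.sin θ < θ := Real.sin_lt hθ
    have h2 : -θ < Real.sin θ := by
      rcases le_or_gt θ 1 with h | h
      · have := Real.sin_pos_of_pos_of_lt_pi hθ (lt_of_le_of_lt h (by linarith [Real.pi_gt_three]))
        linarith
      · nlinarith [Real.neg_one_le_sin θ]
    nlinarith
  have hne : Real.sin θ ^ 2 - θ ^ 2 ≠ 0 := by nlinarith
  have hGθ : 0 < Gf θ := by
    unfold Gf
    apply div_pos (by linarith) (by positivity)
  have hFeq : ∀ t ∈ Ioc (0:ℝ) 1,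
      ((Real.sin (t * θ)) ^ 2 - (t * θ) ^ 2) / ((Real.sin θ) ^ 2 - θ ^ 2) / t ^ 4 =
        Gf (t * θ) / Gf θ := by
    intro t ht
    have ht0 : (t:ℝ) ≠ 0 := ne_of_gt ht.1
    have hθ0 : (θ:ℝ) ≠ 0 := ne_of_gt hθ
    have hne2 : θ ^ 2 - Real.sin θ ^ 2 ≠ 0 := by nlinarith
    unfold Gf
    field_simp
    ring
  have hanti : AntitoneOn
      (fun t : ℝ =>
        ((Real.sin (t * θ)) ^ 2 - (t * θ) ^ 2) / ((Real.sin θ) ^ 2 - θ ^ 2) / t ^ 4)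
      (Ioc 0 1) := by
    intro a ha b hb hab
    simp only
    rw [hFeq a ha, hFeq b hb]
    gcongr
    exact Gf_antitone (mem_Ioi.2 (mul_pos ha.1 hθ)) (mem_Ioi.2 (mul_pos hb.1 hθ))
      (mul_le_mul_of_nonneg_right hab hθ.le)
  refine ⟨hanti, ?_⟩
  intro t ht
  have h1mem : (1:ℝ) ∈ Ioc (0:ℝ) 1 := ⟨one_pos, le_refl 1⟩
  have h := hanti ht h1mem ht.2
  simp only [one_mul, one_pow, div_one, div_self hne] at h
  have ht4 : (0:ℝ) < t ^ 4 := pow_pos ht.1 4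
  rw [ge_iff_le, ← one_le_div ht4]
  exact h
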